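/- Let p be prime, u ≥ 0, and Γ_n cyclic of order pⁿ with generator γ. The map f = (f₁,f₂): ℤ_p[Γ_n] → ℤ_p × (ℤ/p^uℤ)[Γ_n], sending Σ aᵢγⁱ to (Σ aᵢ, Σ [aᵢ]γⁱ), is a ring homomorphism whose kernel is the ideal generated by p^u(γ − 1). -/

import Mathlib

noncomputable abbrev padicGroupRing (p n : ℕ) [Fact p.Prime] : Type :=
  MonoidAlgebra ℤ_[p] (Multiplicative (ZMod (p ^ n)))

noncomputable def γgen (p n : ℕ) [Fact p.Prime] : padicGroupRing p n :=
  MonoidAlgebra.of ℤ_[p] (Multiplicative (ZMod (p ^ n))) (Multiplicative.ofAdd 1)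

lemma gamma_pow_single (p n : ℕ) [Fact p.Prime] (g : Multiplicative (ZMod (p ^ n))) :
    γgen p n ^ (Multiplicative.toAdd g).val = MonoidAlgebra.single g (1 : ℤ_[p]) := by
  haveI : NeZero (p ^ n) := ⟨pow_ne_zero n (Fact.out (p := p.Prime)).ne_zero⟩
  have hg : (Multiplicative.ofAdd (1 : ZMod (p ^ n))) ^ (Multiplicative.toAdd g).val = g := by
    apply Multiplicative.toAdd.injective
    rw [toAdd_pow, toAdd_ofAdd, nsmul_eq_mul, mul_one]
    exact ZMod.natCast_rightInverse (Multiplicative.toAdd g)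
  rw [γgen, MonoidAlgebra.of_apply, MonoidAlgebra.single_pow, one_pow, hg]

lemma aug_mem_span (p n : ℕ) [Fact p.Prime] (y : padicGroupRing p n)
    (hy : (y.coeff.sum fun _ a => a) = 0) : y ∈ Ideal.span {γgen p n - 1} := by
  have key : ∀ z : Multiplicative (ZMod (p ^ n)) →₀ ℤ_[p],
      ((show padicGroupRing p n from MonoidAlgebra.ofCoeff z) - MonoidAlgebra.single 1 (z.sum fun _ a => a))
        ∈ Ideal.span {γgen p n - 1} := by
    intro z
    induction z using Finsupp.induction_linear with
    | zero => simp
    | add a b ha hb =>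
      have heq : ((show padicGroupRing p n from MonoidAlgebra.ofCoeff (a + b)) - MonoidAlgebra.single 1 ((a + b).sum fun _ c => c))
          = ((show padicGroupRing p n from MonoidAlgebra.ofCoeff a) - MonoidAlgebra.single 1 (a.sum fun _ c => c))
            + ((show padicGroupRing p n from MonoidAlgebra.ofCoeff b) - MonoidAlgebra.single 1 (b.sum fun _ c => c)) := by
        rw [Finsupp.sum_add_index' (fun _ => rfl) (fun _ _ _ => rfl), MonoidAlgebra.single_add,
          MonoidAlgebra.ofCoeff_add]
        abel_nf
        rw [add_assoc]
      rw [heq]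
      exact Ideal.add_mem _ ha hb
    | single g b =>
      rw [Finsupp.sum_single_index rfl]
      have h1 : ((show padicGroupRing p n from MonoidAlgebra.ofCoeff (Finsupp.single g b)) - MonoidAlgebra.single 1 b)
          = (MonoidAlgebra.single 1 b : padicGroupRing p n)
            * ((MonoidAlgebra.single g (1:ℤ_[p]) : padicGroupRing p n)
              - (MonoidAlgebra.single 1 (1:ℤ_[p]) : padicGroupRing p n)) := by
        rw [MonoidAlgebra.ofCoeff_single, mul_sub, MonoidAlgebra.single_mul_single, MonoidAlgebra.single_mul_single,
          one_mul, mul_one, mul_one]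
      rw [h1, Ideal.mem_span_singleton]
      have h2 : (γgen p n - 1) ∣ ((MonoidAlgebra.single g (1:ℤ_[p]) : padicGroupRing p n)
          - (MonoidAlgebra.single 1 (1:ℤ_[p]) : padicGroupRing p n)) := by
        rw [← gamma_pow_single p n g]
        have h3 : (MonoidAlgebra.single 1 (1:ℤ_[p]) : padicGroupRing p n) = 1 := rfl
        rw [h3]
        simpa using sub_dvd_pow_sub_pow (γgen p n) 1 (Multiplicative.toAdd g).val
      exact Dvd.dvd.mul_left h2 _
  have h := key y.coeff
  rw [hy] at h
  simpa [MonoidAlgebra.ofCoeff_coeff] using h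

theorem ker_augmentation_times_reduction (p u n : ℕ) [Fact p.Prime] :
    ∃ f : padicGroupRing p n →+*
        ℤ_[p] × MonoidAlgebra (ZMod (p ^ u)) (Multiplicative (ZMod (p ^ n))),
      (∀ (a : ℤ_[p]) (g : Multiplicative (ZMod (p ^ n))),
        f (MonoidAlgebra.single g a) =
          (a, MonoidAlgebra.single g (PadicInt.toZModPow u a))) ∧
      RingHom.ker f = Ideal.span {(p : padicGroupRing p n) ^ u * (γgen p n - 1)} := by
  letI : Algebra ℤ_[p] (ZMod (p ^ u)) := (PadicInt.toZModPow u).toAlgebra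
  set G := Multiplicative (ZMod (p ^ n)) with hG
  set R := MonoidAlgebra (ZMod (p ^ u)) G with hR
  let f₁ : padicGroupRing p n →ₐ[ℤ_[p]] ℤ_[p] := MonoidAlgebra.lift ℤ_[p] ℤ_[p] G 1
  let f₂ : padicGroupRing p n →ₐ[ℤ_[p]] R :=
    MonoidAlgebra.lift ℤ_[p] R G (MonoidAlgebra.of (ZMod (p ^ u)) G)
  have hs1 : ∀ (a : ℤ_[p]) (g : G), f₁ (MonoidAlgebra.single g a) = a := by
    intro a g
    show f₁ (MonoidAlgebra.single g a) = a
    rw [MonoidAlgebra.lift_single]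
    simp
  have hs2 : ∀ (a : ℤ_[p]) (g : G),
      f₂ (MonoidAlgebra.single g a) = MonoidAlgebra.single g (PadicInt.toZModPow u a) := by
    intro a g
    rw [MonoidAlgebra.lift_single, MonoidAlgebra.of_apply]
    show a • (MonoidAlgebra.single g (1 : ZMod (p ^ u))) = MonoidAlgebra.single g (PadicInt.toZModPow u a)
    rw [MonoidAlgebra.smul_single, Algebra.smul_def, mul_one, RingHom.algebraMap_toAlgebra]
  refine ⟨f₁.toRingHom.prod f₂.toRingHom, ?_, ?_⟩
  · intro a g
    rw [RingHom.prod_apply]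
    exact Prod.ext (hs1 a g) (hs2 a g)
  -- kernel computation
  have hf1 : ∀ x : padicGroupRing p n, f₁ x = x.coeff.sum fun _ a => a := by
    have he : f₁.toRingHom.toAddMonoidHom
        = (Finsupp.liftAddHom (fun _ : G => AddMonoidHom.id ℤ_[p])).comp
            MonoidAlgebra.coeffAddEquiv.toAddMonoidHom :=
      MonoidAlgebra.addMonoidHom_ext fun g a => by
        simp only [AlgHom.toRingHom_eq_coe, RingHom.toAddMonoidHom_eq_coe,
          AddMonoidHom.coe_coe, RingHom.coe_coe, AddMonoidHom.coe_comp, Function.comp_apply,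
          AddEquiv.coe_toAddMonoidHom, MonoidAlgebra.coeffAddEquiv_apply,
          MonoidAlgebra.coeff_single, Finsupp.liftAddHom_apply_single,
          AddMonoidHom.id_apply]
        exact hs1 a g
    intro x
    have := DFunLike.congr_fun he x
    simp at this
    exact this
  have hf2 : ∀ x : padicGroupRing p n,
      f₂ x = MonoidAlgebra.ofCoeff (Finsupp.mapRange (PadicInt.toZModPow u) (map_zero _) x.coeff) := by
    have he : f₂.toRingHom.toAddMonoidHom
        = (MonoidAlgebra.coeffAddEquiv.symm.toAddMonoidHom.comp
            (Finsupp.mapRange.addMonoidHom (PadicInt.toZModPow u).toAddMonoidHom)).comp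
            MonoidAlgebra.coeffAddEquiv.toAddMonoidHom :=
      MonoidAlgebra.addMonoidHom_ext fun g a => by
        show f₂ (MonoidAlgebra.single g a)
          = MonoidAlgebra.ofCoeff (Finsupp.mapRange (⇑(PadicInt.toZModPow u))
              (PadicInt.toZModPow u).toAddMonoidHom.map_zero (Finsupp.single g a))
        rw [Finsupp.mapRange_single]
        exact hs2 a g
    intro x
    have := DFunLike.congr_fun he x
    simpa [Finsupp.mapRange.addMonoidHom_apply] using this
  -- the function dividing by p^u
  classical
  have hpu : ((p : ℤ_[p]) ^ u) ≠ 0 :=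
    pow_ne_zero u (Nat.cast_ne_zero.mpr (Fact.out (p := p.Prime)).ne_zero)
  set q : ℤ_[p] → ℤ_[p] := fun a => if h : ((p : ℤ_[p]) ^ u) ∣ a then h.choose else 0 with hqdef
  have hq : ∀ a : ℤ_[p], ((p : ℤ_[p]) ^ u) ∣ a → a = (p : ℤ_[p]) ^ u * q a := by
    intro a h
    simp only [hqdef, dif_pos h]
    exact h.choose_spec
  have hq0 : q 0 = 0 := by
    have h0 : ((p : ℤ_[p]) ^ u) ∣ 0 := dvd_zero _
    have hs := h0.choose_spec
    have : h0.choose = 0 := by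
      rcases mul_eq_zero.mp hs.symm with h | h
      · exact absurd h hpu
      · exact h
    simp only [hqdef, dif_pos h0, this]
  apply le_antisymm
  · -- ker ≤ span
    intro x hx
    rw [RingHom.mem_ker, RingHom.prod_apply, Prod.mk_eq_zero] at hx
    obtain ⟨hx1, hx2⟩ := hx
    simp only [AlgHom.toRingHom_eq_coe, RingHom.coe_coe] at hx1 hx2
    rw [hf1] at hx1
    rw [hf2] at hx2
    have hd : ∀ g : G, ((p : ℤ_[p]) ^ u) ∣ x.coeff g := by
      intro g
      have : PadicInt.toZModPow u (x.coeff g) = 0 := by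
        have := Finsupp.ext_iff.mp (MonoidAlgebra.ofCoeff_eq_zero.mp hx2) g
        simpa [Finsupp.mapRange_apply] using this
      have hk : x.coeff g ∈ RingHom.ker (PadicInt.toZModPow u : ℤ_[p] →+* ZMod (p ^ u)) := this
      rw [PadicInt.ker_toZModPow, Ideal.mem_span_singleton] at hk
      exact hk
    set y : padicGroupRing p n := MonoidAlgebra.ofCoeff (Finsupp.mapRange q hq0 x.coeff) with hydef
    have hxy : x = ((p : ℤ_[p]) ^ u) • y := by
      ext g
      rw [MonoidAlgebra.coeff_smul_apply, smul_eq_mul, hydef, MonoidAlgebra.coeff_ofCoeff,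
        Finsupp.mapRange_apply]
      exact hq (x.coeff g) (hd g)
    have hysum : (y.coeff.sum fun _ a => a) = 0 := by
      rw [← hf1]
      have h1 : f₁ x = ((p : ℤ_[p]) ^ u) * f₁ y := by
        rw [hxy, map_smul, smul_eq_mul]
      rw [hf1 x, hx1] at h1
      rcases mul_eq_zero.mp h1.symm with h | h
      · exact absurd h hpu
      · exact h
    have hy : y ∈ Ideal.span {γgen p n - 1} := aug_mem_span p n y hysum
    rw [Ideal.mem_span_singleton] at hy
    obtain ⟨z, hz⟩ := hy
    rw [Ideal.mem_span_singleton]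
    refine ⟨z, ?_⟩
    rw [hxy, hz, Algebra.smul_def]
    have hmap : (algebraMap ℤ_[p] (padicGroupRing p n)) ((p : ℤ_[p]) ^ u)
        = (p : padicGroupRing p n) ^ u := by
      rw [map_pow, map_natCast]
    rw [hmap]
    ring
  · -- span ≤ ker
    rw [Ideal.span_le, Set.singleton_subset_iff]
    show ((p : padicGroupRing p n) ^ u * (γgen p n - 1))
      ∈ RingHom.ker (f₁.toRingHom.prod f₂.toRingHom)
    rw [RingHom.mem_ker]
    have hγ : (f₁.toRingHom.prod f₂.toRingHom) (γgen p n)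
        = ((1 : ℤ_[p]), (MonoidAlgebra.single (Multiplicative.ofAdd (1 : ZMod (p ^ n)))
            (1 : ZMod (p ^ u)) : R)) := by
      rw [γgen, MonoidAlgebra.of_apply, RingHom.prod_apply]
      refine Prod.ext ?_ ?_
      · simpa using hs1 1 (Multiplicative.ofAdd (1 : ZMod (p ^ n)))
      · simpa using hs2 1 (Multiplicative.ofAdd (1 : ZMod (p ^ n)))
    rw [map_mul, map_sub, map_pow, map_natCast, map_one, hγ]
    have hp2 : ((p : R)) ^ u = 0 := by
      rw [← Nat.cast_pow, ← map_natCast (algebraMap (ZMod (p ^ u)) R) (p ^ u),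
        ZMod.natCast_self, map_zero]
    have hcast : ((p : ℕ) : ℤ_[p] × R) = ((p : ℤ_[p]), (p : R)) := rfl
    have hone : (1 : ℤ_[p] × R) = ((1 : ℤ_[p]), (1 : R)) := rfl
    rw [hcast, hone]
    refine Prod.ext ?_ ?_
    · simp
    · show (p : R) ^ u * _ = 0
      rw [hp2, zero_mul]
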